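/- Let D be a Q⃗4-free oriented graph, let P = p1→p2→⋯→p_ℓ be a forward-induced directed path in D, and let γ be an integer such that χ⃗(N(v)) ≤ γ for each v ∈ V(P). Then χ⃗(N(P) \ N({p1, p_ℓ})) ≤ γ. -/
import Mathlib


namespace DichiP4

variable {V : Type*}

/-- An oriented graph: an arc relation with no digons (hence also no loops). -/
def Oriented (A : V → V → Prop) : Prop := ∀ u v, A u v → ¬ A v u

/-- Adjacency in the underlying (undirected) graph. -/
def Adj (A : V → V → Prop) (u v : V) : Prop := A u v ∨ A v u

/-- The neighborhood `N(v)` of a vertex in the underlying graph. -/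
def nbr (A : V → V → Prop) (v : V) : Set V := {w | Adj A v w}

/-- `N(S)`: the neighborhood of a set of vertices. -/
def nbrSet (A : V → V → Prop) (S : Set V) : Set V := (⋃ v ∈ S, nbr A v) \ S

/-- `N[S]`: the closed neighborhood of a set of vertices. -/
def cnbrSet (A : V → V → Prop) (S : Set V) : Set V := ⋃ v ∈ S, insert v (nbr A v)

/-- A clique in the underlying graph (= the vertex set of a tournament). -/
def IsClique (A : V → V → Prop) (K : Set V) : Prop :=
  ∀ u ∈ K, ∀ v ∈ K, u ≠ v → Adj A u v

/-- The clique number `ω(D)` of the underlying graph. -/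
noncomputable def cliqueNum (A : V → V → Prop) : ℕ :=
  sSup {n | ∃ K : Set V, IsClique A K ∧ K.Finite ∧ K.ncard = n}

/-- The set `s` induces an acyclic subdigraph (no directed cycle within `s`). -/
def AcyclicOn (A : V → V → Prop) (s : Set V) : Prop :=
  ∀ v, ¬ Relation.TransGen (fun x y => x ∈ s ∧ y ∈ s ∧ A x y) v v

/-- The set `s` admits a dicoloring with `k` colors: every color class induces an
acyclic subdigraph. -/
def DicolorableOn (A : V → V → Prop) (s : Set V) (k : ℕ) : Prop :=
  ∃ c : V → ℕ, (∀ v ∈ s, c v < k) ∧ ∀ i : ℕ, AcyclicOn A {v | v ∈ s ∧ c v = i}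

/-- The dichromatic number `χ⃗(s)` of the subdigraph induced by `s`. -/
noncomputable def dichi (A : V → V → Prop) (s : Set V) : ℕ :=
  sInf {k | DicolorableOn A s k}

/-- `A` has an induced subdigraph isomorphic to `B`. -/
def HasInducedCopy {W : Type*} (A : V → V → Prop) (B : W → W → Prop) : Prop :=
  ∃ f : W → V, Function.Injective f ∧ ∀ x y : W, B x y ↔ A (f x) (f y)

/-- `A` is `B`-free: no induced subdigraph of `A` is isomorphic to `B`. -/
def Free {W : Type*} (A : V → V → Prop) (B : W → W → Prop) : Prop :=
  ¬ HasInducedCopy A B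

/-- `P⃗4`: the orientation of the path `0 – 1 – 2 – 3` with arcs `0→1, 1→2, 2→3`. -/
def P4vec : Fin 4 → Fin 4 → Prop := fun x y =>
  (x = 0 ∧ y = 1) ∨ (x = 1 ∧ y = 2) ∨ (x = 2 ∧ y = 3)

/-- `A⃗4`: the orientation of the path `0 – 1 – 2 – 3` with arcs `1→0, 1→2, 3→2`. -/
def A4vec : Fin 4 → Fin 4 → Prop := fun x y =>
  (x = 1 ∧ y = 0) ∨ (x = 1 ∧ y = 2) ∨ (x = 3 ∧ y = 2)

/-- `Q⃗4`: the orientation of the path `0 – 1 – 2 – 3` with arcs `0→1, 2→1, 3→2`. -/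
def Q4vec : Fin 4 → Fin 4 → Prop := fun x y =>
  (x = 0 ∧ y = 1) ∨ (x = 2 ∧ y = 1) ∨ (x = 3 ∧ y = 2)

/-- `Q⃗4'`: the orientation of the path `0 – 1 – 2 – 3` with arcs `1→0, 2→1, 2→3`. -/
def Q4'vec : Fin 4 → Fin 4 → Prop := fun x y =>
  (x = 1 ∧ y = 0) ∨ (x = 2 ∧ y = 1) ∨ (x = 2 ∧ y = 3)

/-- `B` is an orientation of the path on four vertices `0 – 1 – 2 – 3`. -/
def IsP4Orientation (B : Fin 4 → Fin 4 → Prop) : Prop :=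
  Oriented B ∧ ∀ x y : Fin 4, Adj B x y ↔ ((x : ℕ) + 1 = (y : ℕ) ∨ (y : ℕ) + 1 = (x : ℕ))

/-- `p 1 → p 2 → ⋯ → p ℓ` is a directed path in `A` (distinct vertices). -/
def IsDirPath (A : V → V → Prop) (ℓ : ℕ) (p : ℕ → V) : Prop :=
  1 ≤ ℓ ∧ Set.InjOn p (Set.Icc 1 ℓ) ∧ ∀ i, 1 ≤ i → i < ℓ → A (p i) (p (i + 1))

/-- A directed path `p 1 → ⋯ → p ℓ` is forward-induced: no arc `(p i, p j)` with
`j > i + 1`. -/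
def ForwardInduced (A : V → V → Prop) (ℓ : ℕ) (p : ℕ → V) : Prop :=
  ∀ i j, 1 ≤ i → j ≤ ℓ → i + 1 < j → ¬ A (p i) (p j)

/-- `p 1 → ⋯ → p ℓ` is a shortest directed path from `p 1` to `p ℓ`. -/
def IsShortestDirPath (A : V → V → Prop) (ℓ : ℕ) (p : ℕ → V) : Prop :=
  IsDirPath A ℓ p ∧
    ∀ (m : ℕ) (q : ℕ → V), IsDirPath A m q → q 1 = p 1 → q m = p ℓ → ℓ ≤ m

/-- The vertex set `V(P)` of the path `p 1, …, p ℓ`. -/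
def pathSet (ℓ : ℕ) (p : ℕ → V) : Set V := p '' Set.Icc 1 ℓ

/-- `N(P)`: the neighborhood of the vertex set of the path. -/
def pathNbrs (A : V → V → Prop) (ℓ : ℕ) (p : ℕ → V) : Set V := nbrSet A (pathSet ℓ p)

/-- `F i`: vertices of `N(P)` whose first neighbor on the path is `p i`. -/
def Fatt (A : V → V → Prop) (ℓ : ℕ) (p : ℕ → V) (i : ℕ) : Set V :=
  {v ∈ pathNbrs A ℓ p | Adj A v (p i) ∧ ∀ i', 1 ≤ i' → i' < i → ¬ Adj A v (p i')}

/-- `L j`: vertices of `N(P)` whose last neighbor on the path is `p j`. -/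
def Latt (A : V → V → Prop) (ℓ : ℕ) (p : ℕ → V) (j : ℕ) : Set V :=
  {v ∈ pathNbrs A ℓ p | Adj A v (p j) ∧ ∀ j', j < j' → j' ≤ ℓ → ¬ Adj A v (p j')}

/-- `F i ⁺`: in-neighbors of `p i` in `F i`. -/
def FattP (A : V → V → Prop) (ℓ : ℕ) (p : ℕ → V) (i : ℕ) : Set V :=
  {v ∈ Fatt A ℓ p i | A v (p i)}

/-- `F i ⁻`: out-neighbors of `p i` in `F i`. -/
def FattM (A : V → V → Prop) (ℓ : ℕ) (p : ℕ → V) (i : ℕ) : Set V :=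
  {v ∈ Fatt A ℓ p i | A (p i) v}

/-- `L j ⁺`: in-neighbors of `p j` in `L j`. -/
def LattP (A : V → V → Prop) (ℓ : ℕ) (p : ℕ → V) (j : ℕ) : Set V :=
  {v ∈ Latt A ℓ p j | A v (p j)}

/-- `L j ⁻`: out-neighbors of `p j` in `L j`. -/
def LattM (A : V → V → Prop) (ℓ : ℕ) (p : ℕ → V) (j : ℕ) : Set V :=
  {v ∈ Latt A ℓ p j | A (p j) v}

/-- `W^p = (F₂⁻ ∪ ⋯ ∪ F_{ℓ-1}⁻) ∪ (L₂⁺ ∪ ⋯ ∪ L_{ℓ-1}⁺)`. -/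
def Wp (A : V → V → Prop) (ℓ : ℕ) (p : ℕ → V) : Set V :=
  (⋃ i ∈ Set.Icc 2 (ℓ - 1), FattM A ℓ p i) ∪ ⋃ i ∈ Set.Icc 2 (ℓ - 1), LattP A ℓ p i

/-- `W^a = (F₂⁺ ∪ ⋯ ∪ F_{ℓ-1}⁺) ∪ (L₂⁻ ∪ ⋯ ∪ L_{ℓ-1}⁻)`. -/
def Wa (A : V → V → Prop) (ℓ : ℕ) (p : ℕ → V) : Set V :=
  (⋃ i ∈ Set.Icc 2 (ℓ - 1), FattP A ℓ p i) ∪ ⋃ i ∈ Set.Icc 2 (ℓ - 1), LattM A ℓ p i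

/-- `R^p = N(P) \ (N({p1, p2, pℓ}) ∪ W^p)`. -/
def Rp (A : V → V → Prop) (ℓ : ℕ) (p : ℕ → V) : Set V :=
  pathNbrs A ℓ p \ (nbrSet A {p 1, p 2, p ℓ} ∪ Wp A ℓ p)

/-- `R^a = N(P) \ (N({p1, pℓ}) ∪ W^a)`. -/
def Ra (A : V → V → Prop) (ℓ : ℕ) (p : ℕ → V) : Set V :=
  pathNbrs A ℓ p \ (nbrSet A {p 1, p ℓ} ∪ Wa A ℓ p)

/-- A dipolar set: a nonempty set `S` partitioned into `S⁺` (no out-neighbor outside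
`S`) and `S⁻` (no in-neighbor outside `S`). -/
def IsDipolar (A : V → V → Prop) (S : Set V) : Prop :=
  S.Nonempty ∧ ∃ Sp Sm : Set V, Sp ∪ Sm = S ∧ Disjoint Sp Sm ∧
    (∀ v ∈ Sp, ∀ w, w ∉ S → ¬ A v w) ∧ ∀ v ∈ Sm, ∀ w, w ∉ S → ¬ A w v

/-- Reachability by a directed path staying inside `s`. -/
def ReachIn (A : V → V → Prop) (s : Set V) (u v : V) : Prop :=
  Relation.ReflTransGen (fun x y => x ∈ s ∧ y ∈ s ∧ A x y) u v

/-- A digraph is strongly connected. -/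
def StronglyConnected (A : V → V → Prop) : Prop :=
  ∀ u v : V, Relation.ReflTransGen A u v

/-- `t` is a strongly connected component of the subdigraph induced by `s`. -/
def IsSCCOf (A : V → V → Prop) (s t : Set V) : Prop :=
  t ⊆ s ∧ t.Nonempty ∧ (∀ u ∈ t, ∀ v ∈ t, ReachIn A s u v) ∧
    ∀ u ∈ t, ∀ v ∈ s, ReachIn A s u v → ReachIn A s v u → v ∈ t

/-- A source strongly connected component: all arcs between it and the rest of `s`
begin in it. -/
def IsSourceSCC (A : V → V → Prop) (s t : Set V) : Prop :=
  IsSCCOf A s t ∧ ∀ u ∈ s, ∀ v ∈ t, A u v → u ∈ t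

/-- A sink strongly connected component: all arcs between it and the rest of `s`
end in it. -/
def IsSinkSCC (A : V → V → Prop) (s t : Set V) : Prop :=
  IsSCCOf A s t ∧ ∀ u ∈ t, ∀ v ∈ s, A u v → v ∈ t

/-- `K` (a tournament of maximum order) and the directed path `p 1 → ⋯ → p ℓ`
(from a source SCC of `D[K]` to a sink SCC of `D[K]`) form a closed tournament
`C = K ∪ V(P)`. -/
def FormsClosedTournament (A : V → V → Prop) (K : Set V) (ℓ : ℕ) (p : ℕ → V) : Prop :=
  IsClique A K ∧ K.Finite ∧ K.ncard = cliqueNum A ∧ IsDirPath A ℓ p ∧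
    (∃ t, IsSourceSCC A K t ∧ p 1 ∈ t) ∧ ∃ t, IsSinkSCC A K t ∧ p ℓ ∈ t

/-- `K` and `P` form a path-minimizing closed tournament: `|P|` is minimum among
all pairs forming a closed tournament. -/
def FormsPathMinClosedTournament (A : V → V → Prop) (K : Set V) (ℓ : ℕ) (p : ℕ → V) :
    Prop :=
  FormsClosedTournament A K ℓ p ∧
    ∀ (K' : Set V) (ℓ' : ℕ) (p' : ℕ → V), FormsClosedTournament A K' ℓ' p' → ℓ ≤ ℓ'

/-- The strong neighborhood of `S`: neighbors of `S` having both an in-neighbor and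
an out-neighbor in `S`. -/
def strongNbrs (A : V → V → Prop) (S : Set V) : Set V :=
  {v ∈ nbrSet A S | (∃ u ∈ S, A u v) ∧ ∃ u ∈ S, A v u}


section Aux

variable {V : Type*}

private lemma adjSymm {A : V → V → Prop} {u v : V} (h : Adj A u v) : Adj A v u :=
  h.elim Or.inr Or.inl

private lemma dicolorableOn_mono {A : V → V → Prop} {s : Set V} {k k' : ℕ}
    (h : DicolorableOn A s k) (hk : k ≤ k') : DicolorableOn A s k' := by
  obtain ⟨c, h1, h2⟩ := h
  exact ⟨c, fun v hv => lt_of_lt_of_le (h1 v hv) hk, h2⟩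

private lemma exists_dicoloring [Fintype V] {A : V → V → Prop} (hA : Oriented A)
    {s : Set V} {γ : ℕ} (h : dichi A s ≤ γ) :
    ∃ c : V → ℕ, (∀ v ∈ s, c v < γ) ∧ ∀ i : ℕ, AcyclicOn A {v | v ∈ s ∧ c v = i} := by
  classical
  have hmem : DicolorableOn A s (Fintype.card V) := by
    refine ⟨fun v => (Fintype.equivFin V v : ℕ), fun v _ => (Fintype.equivFin V v).2, ?_⟩
    intro i v hv
    have hno : ∀ x y : V,
        ¬ (x ∈ {v | v ∈ s ∧ ((Fintype.equivFin V x : ℕ)) = i} ∧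
           y ∈ {v | v ∈ s ∧ ((Fintype.equivFin V y : ℕ)) = i} ∧ A x y) := by
      rintro x y ⟨hx, hy, hxy⟩
      have hxyeq : x = y := by
        have : Fintype.equivFin V x = Fintype.equivFin V y := Fin.ext (by
          have h1 : ((Fintype.equivFin V x : ℕ)) = i := hx.2
          have h2 : ((Fintype.equivFin V y : ℕ)) = i := hy.2
          omega)
        exact (Fintype.equivFin V).injective this
      subst hxyeq
      exact hA x x hxy hxy
    cases hv with
    | single h' => exact hno _ _ h'
    | tail _ h' => exact hno _ _ h'
  have hne : {k | DicolorableOn A s k}.Nonempty := ⟨Fintype.card V, hmem⟩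
  have hsp : DicolorableOn A s (dichi A s) := Nat.sInf_mem hne
  obtain ⟨c, h1, h2⟩ := dicolorableOn_mono hsp h
  exact ⟨c, h1, h2⟩

private lemma q4_copy {A : V → V → Prop} (hA : Oriented A) {a b c d : V}
    (hab : A a b) (hcb : A c b) (hdc : A d c)
    (hac : ¬ Adj A a c) (had : ¬ Adj A a d) (hbd : ¬ Adj A b d)
    (nac : a ≠ c) (nad : a ≠ d) (nbd : b ≠ d) :
    HasInducedCopy A Q4vec := by
  have loops : ∀ z : V, ¬ A z z := fun z h => hA z z h h
  have hba : ¬ A b a := hA a b hab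
  have hbc : ¬ A b c := hA c b hcb
  have hcd : ¬ A c d := hA d c hdc
  have hac' : ¬ A a c := fun h => hac (Or.inl h)
  have hca' : ¬ A c a := fun h => hac (Or.inr h)
  have had' : ¬ A a d := fun h => had (Or.inl h)
  have hda' : ¬ A d a := fun h => had (Or.inr h)
  have hbd' : ¬ A b d := fun h => hbd (Or.inl h)
  have hdb' : ¬ A d b := fun h => hbd (Or.inr h)
  have nab : a ≠ b := fun h => loops b (h ▸ hab)
  have nbc : b ≠ c := fun h => loops b (h ▸ hcb)
  have ncd : c ≠ d := fun h => loops c (h ▸ hdc)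
  refine ⟨fun j : Fin 4 => if j.val = 0 then a else if j.val = 1 then b
    else if j.val = 2 then c else d, ?_, ?_⟩
  · intro x y h
    fin_cases x <;> fin_cases y <;> simp_all <;>
      first
        | rfl
        | (exact absurd h.symm (by assumption))
  · intro x y
    fin_cases x <;> fin_cases y <;>
      simp [Q4vec] <;>
      first
        | assumption
        | exact loops _
        | (intro h; exact absurd h (by assumption))

end Aux

/-- in a `Q⃗4`-free oriented graph, for a forward-induced directed
path `P = p 1 → ⋯ → p ℓ` with `χ⃗(N(v)) ≤ γ` for each `v ∈ V(P)`,
`χ⃗(N(P) \ N({p 1, p ℓ})) ≤ γ`. -/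
theorem Q4free_pathNbrs_dichi {V : Type*} [Fintype V]
    (A : V → V → Prop) (hA : Oriented A) (hfree : Free A Q4vec)
    (ℓ : ℕ) (p : ℕ → V) (hp : IsDirPath A ℓ p) (hfi : ForwardInduced A ℓ p)
    (γ : ℕ) (hγ : ∀ i, 1 ≤ i → i ≤ ℓ → dichi A (nbr A (p i)) ≤ γ) :
    dichi A (pathNbrs A ℓ p \ nbrSet A {p 1, p ℓ}) ≤ γ := by
  classical
  obtain ⟨hℓ, hinj, harc⟩ := hp
  set S : Set V := pathNbrs A ℓ p \ nbrSet A {p 1, p ℓ} with hSdef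
  -- colorings of the neighborhoods of path vertices
  have hccE : ∀ i : ℕ, ∃ c : V → ℕ, 1 ≤ i → i ≤ ℓ →
      (∀ v ∈ nbr A (p i), c v < γ) ∧ ∀ j : ℕ, AcyclicOn A {v | v ∈ nbr A (p i) ∧ c v = j} := by
    intro i
    by_cases h1 : 1 ≤ i ∧ i ≤ ℓ
    · obtain ⟨c, hc1, hc2⟩ := exists_dicoloring hA (hγ i h1.1 h1.2)
      exact ⟨c, fun _ _ => ⟨hc1, hc2⟩⟩
    · exact ⟨fun _ => 0, fun h2 h3 => absurd ⟨h2, h3⟩ h1⟩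
  choose cc hcc using hccE
  -- the first-attachment function
  set f : V → ℕ := fun v => sInf {k | 1 ≤ k ∧ k ≤ ℓ ∧ Adj A v (p k)} with hfdef
  have hpmem : ∀ k, 1 ≤ k → k ≤ ℓ → p k ∈ pathSet ℓ p := fun k h1 h2 => ⟨k, ⟨h1, h2⟩, rfl⟩
  -- basic facts about vertices in S
  have hSfacts : ∀ v ∈ S, v ∉ pathSet ℓ p ∧
      (1 ≤ f v ∧ f v ≤ ℓ ∧ Adj A v (p (f v))) ∧ 2 ≤ f v ∧
      ∀ k, 1 ≤ k → k < f v → ¬ Adj A v (p k) := by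
    intro v hv
    obtain ⟨hv1, hv2⟩ := hv
    obtain ⟨hvU, hvP⟩ := hv1
    simp only [Set.mem_iUnion] at hvU
    obtain ⟨w, hw, hvw⟩ := hvU
    obtain ⟨k, hk, rfl⟩ := hw
    have hkadj : Adj A v (p k) := adjSymm hvw
    have hne : {k | 1 ≤ k ∧ k ≤ ℓ ∧ Adj A v (p k)}.Nonempty := ⟨k, hk.1, hk.2, hkadj⟩
    have hfm : 1 ≤ f v ∧ f v ≤ ℓ ∧ Adj A v (p (f v)) := Nat.sInf_mem hne
    have hnadj1 : ¬ Adj A v (p 1) := by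
      intro h
      apply hv2
      refine ⟨?_, ?_⟩
      · simp only [Set.mem_iUnion]
        exact ⟨p 1, Or.inl rfl, adjSymm h⟩
      · intro hc
        rcases hc with hc | hc
        · exact hvP (hc ▸ hpmem 1 le_rfl hℓ)
        · exact hvP (hc ▸ hpmem ℓ hℓ le_rfl)
    have hmin : ∀ k, 1 ≤ k → k < f v → ¬ Adj A v (p k) := by
      intro k hk1 hklt hadj
      have : f v ≤ k := Nat.sInf_le ⟨hk1, le_trans (le_of_lt hklt) hfm.2.1, hadj⟩
      omega
    have h2 : 2 ≤ f v := by
      rcases Nat.lt_or_ge (f v) 2 with h | h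
      · interval_cases h' : f v
        · omega
        · exact absurd hfm.2.2 hnadj1
      · exact h
    exact ⟨hvP, hfm, h2, hmin⟩
  -- MAIN FACT: arcs inside S never decrease f
  have main : ∀ x ∈ S, ∀ y ∈ S, A x y → f x ≤ f y := by
    intro x hx y hy hxy
    by_contra hlt
    push_neg at hlt
    obtain ⟨hxP, hxmem, hx2, hxmin⟩ := hSfacts x hx
    obtain ⟨hyP, hymem, hy2, hymin⟩ := hSfacts y hy
    obtain ⟨hi1, hiℓ, hyadj⟩ := hymem
    have hprev : A (p (f y - 1)) (p (f y)) := by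
      have h := harc (f y - 1) (by omega) (by omega)
      have he : f y - 1 + 1 = f y := by omega
      rwa [he] at h
    have hnyprev : ¬ Adj A y (p (f y - 1)) := hymin (f y - 1) (by omega) (by omega)
    have hnxi : ¬ Adj A x (p (f y)) := hxmin (f y) hi1 hlt
    have hnxprev : ¬ Adj A x (p (f y - 1)) := hxmin (f y - 1) (by omega) (by omega)
    have hxnp : ∀ k, 1 ≤ k → k ≤ ℓ → x ≠ p k := fun k h1 h2 h => hxP (h ▸ hpmem k h1 h2)
    have hynp : ∀ k, 1 ≤ k → k ≤ ℓ → y ≠ p k := fun k h1 h2 h => hyP (h ▸ hpmem k h1 h2)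
    rcases hyadj with hyp | hpy
    · -- Q4 copy on (p (f y - 1), p (f y), y, x)
      exact hfree (q4_copy hA hprev hyp hxy
        (fun h => hnyprev (adjSymm h)) (fun h => hnxprev (adjSymm h))
        (fun h => hnxi (adjSymm h))
        (fun h => hynp (f y - 1) (by omega) (by omega) h.symm)
        (fun h => hxnp (f y - 1) (by omega) (by omega) h.symm)
        (fun h => hxnp (f y) hi1 hiℓ h.symm))
    · -- Q4 copy on (x, y, p (f y), p (f y - 1))
      exact hfree (q4_copy hA hxy hpy hprev
        hnxi hnxprev (fun h => hnyprev h)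
        (hxnp (f y) hi1 hiℓ) (hxnp (f y - 1) (by omega) (by omega))
        (hynp (f y - 1) (by omega) (by omega)))
  -- the combined coloring
  set c : V → ℕ := fun v => cc (f v) v with hcdef
  have hbound : ∀ v ∈ S, c v < γ := by
    intro v hv
    obtain ⟨_, ⟨h1, h2, hadj⟩, _, _⟩ := hSfacts v hv
    exact (hcc (f v) h1 h2).1 v (adjSymm hadj)
  refine Nat.sInf_le ⟨c, hbound, ?_⟩
  intro col v0 hcy
  have hv0S : v0 ∈ S := by
    cases hcy with
    | single h' => exact h'.1.1
    | tail _ h' => exact h'.2.1.1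
  obtain ⟨_, ⟨hi1, hiℓ, _⟩, _, _⟩ := hSfacts v0 hv0S
  -- f is monotone along TransGen chains
  have monof : ∀ a b : V, Relation.TransGen
      (fun x y => x ∈ {v | v ∈ S ∧ c v = col} ∧ y ∈ {v | v ∈ S ∧ c v = col} ∧ A x y) a b →
      f a ≤ f b := by
    intro a b h
    induction h with
    | single h' => exact main _ h'.1.1 _ h'.2.1.1 h'.2.2
    | tail _ h' ih => exact le_trans ih (main _ h'.1.1 _ h'.2.1.1 h'.2.2)
  have conv : ∀ x : V, x ∈ {v | v ∈ S ∧ c v = col} → f x = f v0 →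
      x ∈ {v | v ∈ nbr A (p (f v0)) ∧ cc (f v0) v = col} := by
    intro x hx hfx
    obtain ⟨_, ⟨_, _, hadj⟩, _, _⟩ := hSfacts x hx.1
    refine ⟨?_, ?_⟩
    · show Adj A (p (f v0)) x
      exact adjSymm (hfx ▸ hadj)
    · have := hx.2
      rw [hcdef] at this
      simpa [hfx] using this
  have hB : ∀ b : V, Relation.TransGen
      (fun x y => x ∈ {v | v ∈ S ∧ c v = col} ∧ y ∈ {v | v ∈ S ∧ c v = col} ∧ A x y) v0 b →
      f b = f v0 → Relation.TransGen
      (fun x y => x ∈ {v | v ∈ nbr A (p (f v0)) ∧ cc (f v0) v = col} ∧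
        y ∈ {v | v ∈ nbr A (p (f v0)) ∧ cc (f v0) v = col} ∧ A x y) v0 b := by
    intro b h
    induction h with
    | single h' =>
      intro hb
      exact Relation.TransGen.single ⟨conv _ h'.1 rfl, conv _ h'.2.1 hb, h'.2.2⟩
    | @tail m b hvm h' ih =>
      intro hb
      have h1 : f v0 ≤ f m := monof _ _ hvm
      have h2 : f m ≤ f b := main _ h'.1.1 _ h'.2.1.1 h'.2.2
      have hm : f m = f v0 := by omega
      exact Relation.TransGen.tail (ih hm) ⟨conv _ h'.1 hm, conv _ h'.2.1 hb, h'.2.2⟩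
  exact (hcc (f v0) hi1 hiℓ).2 col v0 (hB v0 hcy rfl)

end DichiP4
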